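/- Let s ∈ Z/nZ be nonzero, let I, J be compatible for shift s, and let K ⊆ Z/nZ satisfy K ∩ (K+s) = ∅ and K ∩ (I ∪ J ∪ (I−s) ∪ (J+s)) = ∅ (K feasible for I, J, s). Then the number of permutations σ of Z/nZ with σ(i) = i for all i ∈ I, σ(j) = j + s for all j ∈ J, and σ(k) ∈ {k, k+s} for all k ∈ K, equals 2^{|K|} · (n − |I ∪ J ∪ K|)!. -/

import Mathlib

/-- `I` and `J` are compatible for shift `s`: the sets `I`, `J`, `I - s`, `J + s`
are pairwise disjoint. -/
def Compatible {n : ℕ} (I J : Finset (ZMod n)) (s : ZMod n) : Prop :=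
  Disjoint I J ∧ Disjoint I (I.image (· - s)) ∧ Disjoint I (J.image (· + s)) ∧
  Disjoint J (I.image (· - s)) ∧ Disjoint J (J.image (· + s)) ∧
  Disjoint (I.image (· - s)) (J.image (· + s))

/-- `K` is feasible for `I`, `J`, `s`. -/
def Feasible {n : ℕ} (I J K : Finset (ZMod n)) (s : ZMod n) : Prop :=
  Disjoint K (K.image (· + s)) ∧
  Disjoint K (I ∪ J ∪ I.image (· - s) ∪ J.image (· + s))


open Finset in
lemma card_perm_extend {α : Type*} [Fintype α] [DecidableEq α] (A : Finset α) (f : α → α)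
    (hf : Set.InjOn f A) :
    (Finset.univ.filter fun σ : Equiv.Perm α => ∀ a ∈ A, σ a = f a).card
      = Nat.factorial (Fintype.card α - A.card) := by
  classical
  set B := A.image f with hBdef
  have hBcard : B.card = A.card := Finset.card_image_of_injOn hf
  have hcard : Fintype.card (↥(Aᶜ : Finset α)) = Fintype.card (↥(Bᶜ : Finset α)) := by
    simp [Finset.card_compl, hBcard]
  -- forward map as a function
  have hmapmem : ∀ (σ : Equiv.Perm α), (∀ a ∈ A, σ a = f a) → ∀ x : α, x ∉ A → σ x ∉ B := by
    intro σ hσ x hx hmem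
    obtain ⟨a, ha, hfa⟩ := Finset.mem_image.mp hmem
    rw [← hσ a ha] at hfa
    exact hx (σ.injective hfa ▸ ha)
  let F : {σ : Equiv.Perm α // ∀ a ∈ A, σ a = f a} → ((↥(Aᶜ : Finset α)) ≃ (↥(Bᶜ : Finset α))) :=
    fun σ => Equiv.ofBijective
      (fun x => ⟨σ.1 x.1, Finset.mem_compl.mpr (hmapmem σ.1 σ.2 x.1 (Finset.mem_compl.mp x.2))⟩)
      (by
        rw [Fintype.bijective_iff_injective_and_card]
        refine ⟨fun x y hxy => ?_, hcard⟩
        apply Subtype.ext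
        exact σ.1.injective (congrArg Subtype.val hxy))
  have hFbij : Function.Bijective F := by
    constructor
    · intro σ τ hστ
      apply Subtype.ext
      apply Equiv.ext
      intro x
      by_cases hx : x ∈ A
      · rw [σ.2 x hx, τ.2 x hx]
      · have := congrArg (fun e => (e ⟨x, Finset.mem_compl.mpr hx⟩ : ↥(Bᶜ : Finset α)).1) hστ
        simpa [F, Equiv.ofBijective] using this
    · intro e
      set g : α → α := fun x => if h : x ∈ A then f x else (e ⟨x, Finset.mem_compl.mpr h⟩).1
        with hgdef
      have hg : Function.Injective g := by
        intro x y hxy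
        by_cases hx : x ∈ A <;> by_cases hy : y ∈ A
        · exact hf hx hy (by simpa [g, hx, hy] using hxy)
        · exfalso
          have h1 : g x ∈ B := by simp [g, hx]; exact Finset.mem_image_of_mem f hx
          have h2 : g y ∉ B := by
            simp only [g, dif_neg hy]
            exact Finset.mem_compl.mp (e ⟨y, Finset.mem_compl.mpr hy⟩).2
          exact h2 (hxy ▸ h1)
        · exfalso
          have h1 : g y ∈ B := by simp [g, hy]; exact Finset.mem_image_of_mem f hy
          have h2 : g x ∉ B := by
            simp only [g, dif_neg hx]
            exact Finset.mem_compl.mp (e ⟨x, Finset.mem_compl.mpr hx⟩).2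
          exact h2 (hxy ▸ h1)
        · simpa [g, hx, hy] using hxy
      let σ : Equiv.Perm α := Equiv.ofBijective g (Finite.injective_iff_bijective.mp hg)
      have hσprop : ∀ a ∈ A, σ a = f a := by
        intro a ha
        simp [σ, Equiv.ofBijective, g, ha]
      refine ⟨⟨σ, hσprop⟩, ?_⟩
      apply Equiv.ext
      intro x
      apply Subtype.ext
      have hx : x.1 ∉ A := Finset.mem_compl.mp x.2
      simp [F, Equiv.ofBijective, σ, g, hx]
  have : Fintype.card {σ : Equiv.Perm α // ∀ a ∈ A, σ a = f a}
      = Fintype.card ((↥(Aᶜ : Finset α)) ≃ (↥(Bᶜ : Finset α))) := Fintype.card_of_bijective hFbij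
  rw [← Fintype.card_subtype, this, Fintype.card_equiv (Fintype.equivOfCardEq hcard)]
  simp [Finset.card_compl]

theorem card_perms_feasible (n : ℕ) [NeZero n] (s : ZMod n) (hs : s ≠ 0)
    (I J K : Finset (ZMod n)) (hcomp : Compatible I J s) (hfeas : Feasible I J K s) :
    (Finset.univ.filter
      (fun σ : Equiv.Perm (ZMod n) =>
        (∀ i ∈ I, σ i = i) ∧ (∀ j ∈ J, σ j = j + s) ∧
          (∀ k ∈ K, σ k = k ∨ σ k = k + s))).card =
    2 ^ K.card * Nat.factorial (n - (I ∪ J ∪ K).card) := by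
  classical
  set A : Finset (ZMod n) := I ∪ J ∪ K with hA
  -- disjointness facts
  obtain ⟨hKK, hKrest⟩ := hfeas
  rw [Finset.disjoint_union_right, Finset.disjoint_union_right, Finset.disjoint_union_right]
    at hKrest
  obtain ⟨⟨⟨hKI, hKJ⟩, hKI'⟩, hKJ'⟩ := hKrest
  obtain ⟨hIJ, _, hIJ', _, _, _⟩ := hcomp
  -- the family of prescribed maps
  set f : Finset (ZMod n) → ZMod n → ZMod n :=
    fun T x => if x ∈ J ∪ T then x + s else x with hfdef
  -- injectivity on A for each T ⊆ K
  have hinj : ∀ T ∈ K.powerset, Set.InjOn (f T) A := by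
    intro T hT
    rw [Finset.mem_powerset] at hT
    have key : ∀ x ∈ A, ∀ y ∈ A, x ∈ J ∪ T → y ∉ J ∪ T → x + s ≠ y := by
      intro x hx y hy hxJT hyJT hxy
      have hyIK : y ∈ I ∨ y ∈ K := by
        simp only [hA, Finset.mem_union] at hy
        rcases hy with (h | h) | h
        · exact Or.inl h
        · exact absurd (Finset.mem_union_left T h) hyJT
        · exact Or.inr h
      rcases Finset.mem_union.mp hxJT with hxJ | hxT
      · have hyJ' : y ∈ J.image (· + s) := Finset.mem_image.mpr ⟨x, hxJ, hxy⟩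
        rcases hyIK with hyI | hyK
        · exact Finset.disjoint_left.mp hIJ' hyI hyJ'
        · exact Finset.disjoint_left.mp hKJ' hyK hyJ'
      · have hxK : x ∈ K := hT hxT
        rcases hyIK with hyI | hyK
        · have : x ∈ I.image (· - s) := Finset.mem_image.mpr ⟨y, hyI, by rw [← hxy]; ring⟩
          exact Finset.disjoint_left.mp hKI' hxK this
        · have : y ∈ K.image (· + s) := Finset.mem_image.mpr ⟨x, hxK, hxy⟩
          exact Finset.disjoint_left.mp hKK hyK this
    intro x hx y hy hxy
    simp only [hfdef] at hxy
    by_cases hx' : x ∈ J ∪ T <;> by_cases hy' : y ∈ J ∪ T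
    · rw [if_pos hx', if_pos hy'] at hxy
      exact add_right_cancel hxy
    · rw [if_pos hx', if_neg hy'] at hxy
      exact absurd hxy (key x hx y hy hx' hy')
    · rw [if_neg hx', if_pos hy'] at hxy
      exact absurd hxy.symm (key y hy x hx hy' hx')
    · rwa [if_neg hx', if_neg hy'] at hxy
  -- the filter splits as a biUnion over T ⊆ K
  have hset : (Finset.univ.filter
      (fun σ : Equiv.Perm (ZMod n) =>
        (∀ i ∈ I, σ i = i) ∧ (∀ j ∈ J, σ j = j + s) ∧
          (∀ k ∈ K, σ k = k ∨ σ k = k + s)))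
      = K.powerset.biUnion (fun T =>
          Finset.univ.filter fun σ : Equiv.Perm (ZMod n) => ∀ a ∈ A, σ a = f T a) := by
    ext σ
    simp only [Finset.mem_filter, Finset.mem_biUnion, Finset.mem_univ, true_and,
      Finset.mem_powerset]
    constructor
    · rintro ⟨hI, hJ, hK⟩
      refine ⟨K.filter (fun k => σ k = k + s), Finset.filter_subset _ _, ?_⟩
      intro a ha
      simp only [hA, Finset.mem_union] at ha
      rcases ha with (haI | haJ) | haK
      · have h1 : a ∉ J := Finset.disjoint_left.mp hIJ haI
        have h2 : a ∉ K.filter (fun k => σ k = k + s) := fun h =>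
          Finset.disjoint_left.mp hKI (Finset.mem_filter.mp h).1 haI
        simp [f, h1, h2, hI a haI]
      · simp [f, haJ, hJ a haJ]
      · rcases hK a haK with h | h
        · have h1 : a ∉ J := Finset.disjoint_left.mp hKJ haK
          have h2 : a ∉ K.filter (fun k => σ k = k + s) := by
            intro hmem
            have := (Finset.mem_filter.mp hmem).2
            rw [h] at this
            exact hs (by linear_combination -this)
          simp [f, h1, h2, h]
        · simp [f, Finset.mem_filter, haK, h]
    · rintro ⟨T, hT, hσ⟩
      refine ⟨?_, ?_, ?_⟩
      · intro i hi
        have h1 : i ∉ J := Finset.disjoint_left.mp hIJ hi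
        have h2 : i ∉ T := fun h => Finset.disjoint_left.mp hKI (hT h) hi
        have := hσ i (by simp [hA, hi])
        simpa [f, h1, h2] using this
      · intro j hj
        have := hσ j (by simp [hA, hj])
        simpa [f, hj] using this
      · intro k hk
        have := hσ k (by simp [hA, hk])
        simp only [hfdef] at this
        by_cases h : k ∈ J ∪ T
        · right; rwa [if_pos h] at this
        · left; rwa [if_neg h] at this
  rw [hset, Finset.card_biUnion]
  · have : ∀ T ∈ K.powerset,
        (Finset.univ.filter fun σ : Equiv.Perm (ZMod n) => ∀ a ∈ A, σ a = f T a).card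
          = Nat.factorial (n - A.card) := by
      intro T hT
      rw [card_perm_extend A (f T) (hinj T hT), ZMod.card]
    rw [Finset.sum_congr rfl this, Finset.sum_const, Finset.card_powerset, smul_eq_mul]
  · -- pairwise disjoint
    intro T hT T' hT' hne
    rw [Finset.mem_coe, Finset.mem_powerset] at hT hT'
    rw [Function.onFun, Finset.disjoint_left]
    intro σ hσ hσ'
    rw [Finset.mem_filter] at hσ hσ'
    have : ∃ k, (k ∈ T ∧ k ∉ T') ∨ (k ∈ T' ∧ k ∉ T) := by
      by_contra h
      push_neg at h
      exact hne (Finset.ext fun k => by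
        have := h k
        constructor <;> intro hk <;> by_contra hk' <;> tauto)
    obtain ⟨k, hcase⟩ := this
    have contra : ∀ U V : Finset (ZMod n), U ⊆ K → k ∈ U → k ∉ V →
        (∀ a ∈ A, σ k = f U a → True) → σ k = f U k → σ k = f V k → False := by
      intro U V hUK hkU hkV _ h1 h2
      have hkK : k ∈ K := hUK hkU
      have hkJ : k ∉ J := Finset.disjoint_left.mp hKJ hkK
      rw [show f U k = k + s from if_pos (Finset.mem_union_right J hkU)] at h1
      rw [show f V k = k from if_neg (by simp [hkJ, hkV])] at h2
      rw [h2] at h1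
      exact hs (by linear_combination -h1)
    rcases hcase with ⟨h1, h2⟩ | ⟨h1, h2⟩
    · have hkA : k ∈ A := by simp [hA, hT h1]
      exact contra T T' hT h1 h2 (fun _ _ _ => trivial) (hσ.2 k hkA) (hσ'.2 k hkA)
    · have hkA : k ∈ A := by simp [hA, hT' h1]
      exact contra T' T hT' h1 h2 (fun _ _ _ => trivial) (hσ'.2 k hkA) (hσ.2 k hkA)
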